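/- Let V be a subspace of H¹₀(Ω) with V ⊂ H²(Ω)-smooth functions (so that z := −A∇v has div z ∈ L²(Ω) for v ∈ V), let u ∈ H¹₀(Ω) be the weak solution of −div(A∇u) + σu = f, and let u_G ∈ V be the Galerkin solution: a(u_G, ψ) + σ(u_G, ψ) = (f, ψ) for all ψ ∈ V. Let Q be the L²-orthogonal projection onto V, and suppose σ* > 0 satisfies ‖u−u_G‖²_A ≥ σ*·‖u − Qu‖²_{L²(Ω)}. Then for 0 ≤ σ ≤ σ*: ‖u_G − u‖²_A + σ‖u_G − u‖²_{L²(Ω)} ≤ (2/(1+σ/σ*))·(1/σ*)·‖f − σu_G + div(A∇u_G)‖²_{L²(Ω)}. -/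

import Mathlib

/-- Bound (3.9) of Theorem 3.1 for smooth Galerkin solutions: with the test flux
z_G = −A∇u_G the diffusion term vanishes and only the residual term remains.
Abstract formalization: `H` plays the role of `L²(Ω)` containing `H¹₀(Ω)`,
`a` is the energy form a(v,w) = ∫ ∇v·A∇w, `V` the smooth Galerkin subspace,
`Lap v = div(A∇v)` (well defined on V), `Q` the L²-orthogonal projection on V. -/
theorem stmt_18 {H : Type*} [NormedAddCommGroup H] [InnerProductSpace ℝ H]
    (a : H → H → ℝ) (hsymm : ∀ v w, a v w = a w v) (hpos : ∀ v, 0 ≤ a v v)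
    (habil : ∀ (c : ℝ) (v v' w : H), a (c • v + v') w = c * a v w + a v' w)
    (V : Submodule ℝ H) (Lap : H →ₗ[ℝ] H)
    -- integration by parts: a(v,φ) = −(div(A∇v), φ) for smooth v ∈ V
    (hibp : ∀ v ∈ V, ∀ φ : H, a v φ = -(inner ℝ (Lap v) φ : ℝ))
    (σ σs : ℝ) (hσ0 : 0 ≤ σ) (hσs : 0 < σs) (hσσ : σ ≤ σs)
    (f u uG : H)
    -- u is the weak solution of −div(A∇u) + σu = f
    (hweak : ∀ φ : H, a u φ + σ * (inner ℝ u φ : ℝ) = (inner ℝ f φ : ℝ))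
    -- uG is the Galerkin solution in V
    (hG : uG ∈ V ∧ ∀ ψ ∈ V, a uG ψ + σ * (inner ℝ uG ψ : ℝ) = (inner ℝ f ψ : ℝ))
    -- Q is the L²-orthogonal projection onto V
    (Q : H → H) (hQmem : ∀ φ, Q φ ∈ V)
    (hQorth : ∀ φ : H, ∀ ψ ∈ V, (inner ℝ (φ - Q φ) ψ : ℝ) = 0)
    -- modified critical-value inequality (3.2)
    (hcrit : σs * ‖u - Q u‖ ^ 2 ≤ a (u - uG) (u - uG)) :
    a (uG - u) (uG - u) + σ * ‖uG - u‖ ^ 2 ≤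
      (2 / (1 + σ / σs)) * (1 / σs) * ‖f - σ • uG + Lap uG‖ ^ 2 := by
  obtain ⟨huG, hGal⟩ := hG
  -- bilinearity consequences
  have h0 : ∀ w, a 0 w = 0 := by
    intro w
    have h := habil 1 0 0 w
    simp at h
    linarith
  have hsub : ∀ v w φ, a (v - w) φ = a v φ - a w φ := by
    intro v w φ
    have h := habil (-1) w v φ
    have h2 : (-1 : ℝ) • w + v = v - w := by
      rw [neg_one_smul]; abel
    rw [h2] at h
    linarith
  have hneg : ∀ x y, a (-x) y = - a x y := by
    intro x y
    have h := hsub 0 x y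
    simpa [h0] using h
  -- key residual identity
  have hres : ∀ φ : H, (inner ℝ (f - σ • uG + Lap uG) φ : ℝ)
      = a (u - uG) φ + σ * (inner ℝ (u - uG) φ : ℝ) := by
    intro φ
    rw [inner_add_left, inner_sub_left, real_inner_smul_left, hsub, inner_sub_left]
    have hw := hweak φ
    have hl := hibp uG huG φ
    linarith
  -- Galerkin orthogonality of the residual
  have horth : ∀ ψ ∈ V, (inner ℝ (f - σ • uG + Lap uG) ψ : ℝ) = 0 := by
    intro ψ hψ
    rw [hres, hsub, inner_sub_left]
    have h1 := hweak ψ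
    have h2 := hGal ψ hψ
    linarith
  set r := f - σ • uG + Lap uG with hr
  set S := a (u - uG) (u - uG) + σ * ‖u - uG‖ ^ 2 with hSdef
  have hSr : S = (inner ℝ r (u - Q u) : ℝ) := by
    have h1 : (inner ℝ r (u - uG) : ℝ) = S := by
      rw [hres, hSdef, real_inner_self_eq_norm_sq]
    have h2 := horth uG huG
    have h3 := horth (Q u) (hQmem u)
    rw [inner_sub_right] at h1 ⊢
    rw [h2] at h1
    rw [h3]
    linarith
  have hSnn : 0 ≤ S := add_nonneg (hpos _) (mul_nonneg hσ0 (sq_nonneg _))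
  have hcs : S ≤ ‖r‖ * ‖u - Q u‖ := by
    rw [hSr]; exact real_inner_le_norm r (u - Q u)
  have hq : σs * ‖u - Q u‖ ^ 2 ≤ S := by
    refine hcrit.trans ?_
    rw [hSdef]
    nlinarith [mul_nonneg hσ0 (sq_nonneg ‖u - uG‖)]
  have hS2 : S * σs ≤ ‖r‖ ^ 2 := by
    rcases eq_or_lt_of_le hSnn with h | h
    · rw [← h]; simpa using sq_nonneg ‖r‖
    · nlinarith [mul_le_mul hcs hcs hSnn (mul_nonneg (norm_nonneg r) (norm_nonneg (u - Q u))),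
        sq_nonneg ‖u - Q u‖, norm_nonneg r]
  -- rewrite the LHS
  have hLHS : a (uG - u) (uG - u) + σ * ‖uG - u‖ ^ 2 = S := by
    have e1 : uG - u = -(u - uG) := by abel
    have e2 : a (uG - u) (uG - u) = a (u - uG) (u - uG) := by
      rw [e1, hneg, hsymm, hneg, hsymm]; ring
    rw [e2, norm_sub_rev, hSdef]
  rw [hLHS]
  have hfac : 1 ≤ 2 / (1 + σ / σs) := by
    have h1 : 0 < 1 + σ / σs := by positivity
    rw [le_div_iff₀ h1]
    have h2 : σ / σs ≤ 1 := (div_le_one hσs).mpr hσσ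
    linarith
  calc S ≤ ‖r‖ ^ 2 / σs := (le_div_iff₀ hσs).mpr hS2
    _ = 1 * (1 / σs) * ‖r‖ ^ 2 := by ring
    _ ≤ (2 / (1 + σ / σs)) * (1 / σs) * ‖r‖ ^ 2 := by
        apply mul_le_mul_of_nonneg_right _ (sq_nonneg _)
        apply mul_le_mul_of_nonneg_right hfac
        positivity
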